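/- (Sylvester's law of inertia with a general transformation.) Let H be an n×n Hermitian matrix and S an n×m complex matrix. Then n_-(S* H S) = n_-([H]_{Ran S}) and n_+(S* H S) = n_+([H]_{Ran S}), where Ran S is the column space of S. -/

import Mathlib

open Matrix

/-- A finite simple graph with a chosen orientation of each edge:
`E` is the edge index type, each edge `e` goes from `src e` to `tgt e`. -/
structure OrientedGraph (V E : Type*) where
  src : E → V
  tgt : E → V
  loopless : ∀ e, src e ≠ tgt e
  edgeInj : ∀ e f, (src e = src f ∧ tgt e = tgt f) ∨ (src e = tgt f ∧ tgt e = src f) → e = f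

/-- The underlying simple graph: `r` and `s` are adjacent iff some oriented edge joins them. -/
def OrientedGraph.toSimpleGraph {V E : Type*} (G : OrientedGraph V E) : SimpleGraph V where
  Adj r s := ∃ e, (G.src e = r ∧ G.tgt e = s) ∨ (G.src e = s ∧ G.tgt e = r)
  symm := by
    refine ⟨fun r s h => ?_⟩
    obtain ⟨e, h⟩ := h
    exact ⟨e, h.symm⟩
  loopless := by
    refine ⟨fun r h => ?_⟩
    obtain ⟨e, h⟩ := h
    rcases h with ⟨h1, h2⟩ | ⟨h1, h2⟩ <;> exact G.loopless e (h1.trans h2.symm)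

/-- `H` is strictly supported on `G`: off-diagonal entries are nonzero exactly on edges. -/
def OrientedGraph.StrictSupport {V E : Type*} (G : OrientedGraph V E)
    (H : Matrix V V ℝ) : Prop :=
  ∀ r s, r ≠ s → (H r s ≠ 0 ↔ G.toSimpleGraph.Adj r s)

/-- `H` is supported on `G`: off-diagonal nonzero entries occur only on edges. -/
def OrientedGraph.Support {V E : Type*} (G : OrientedGraph V E)
    (H : Matrix V V ℝ) : Prop :=
  ∀ r s, r ≠ s → H r s ≠ 0 → G.toSimpleGraph.Adj r s

/-- The coboundary map `d : ℝ^V → ℝ^E`, `(dθ)_{(r→s)} = θ_s - θ_r`, as an `E × V` matrix. -/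
def OrientedGraph.cob {V E : Type*} [DecidableEq V] (G : OrientedGraph V E) :
    Matrix E V ℝ :=
  Matrix.of fun e v => (if G.tgt e = v then (1 : ℝ) else 0) - (if G.src e = v then (1 : ℝ) else 0)

/-- The cycle space `Z = ker dᵀ ⊆ ℝ^E`. -/
noncomputable def OrientedGraph.cycleSpace {V E : Type*} [Fintype V] [Fintype E]
    [DecidableEq V] (G : OrientedGraph V E) : Submodule ℝ (E → ℝ) :=
  LinearMap.ker (G.cob)ᵀ.mulVecLin

/-- The diagonal matrix `Φ` on `ℝ^E` with entries `Φ_{(r→s)} = -ψ_r H_{rs} ψ_s`. -/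
noncomputable def PhiMat {V E : Type*} [DecidableEq E] (G : OrientedGraph V E)
    (H : Matrix V V ℝ) (ψ : V → ℝ) : Matrix E E ℝ :=
  Matrix.diagonal fun e => -(ψ (G.src e) * H (G.src e) (G.tgt e) * ψ (G.tgt e))

/-- The nodal count `ν(ψ,H) = #{(r→s) ∈ E : ψ_r H_{rs} ψ_s > 0}`. -/
noncomputable def nodalCount {V E : Type*} (G : OrientedGraph V E)
    (H : Matrix V V ℝ) (ψ : V → ℝ) : ℕ :=
  Nat.card {e : E // 0 < ψ (G.src e) * H (G.src e) (G.tgt e) * ψ (G.tgt e)}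

/-- `C` is a frame for the cycle space: its columns form a basis of `Z`. -/
def IsFrame {V E : Type*} [Fintype V] [Fintype E] [DecidableEq V]
    (G : OrientedGraph V E) {β : ℕ} (C : Matrix E (Fin β) ℝ) : Prop :=
  LinearMap.ker C.mulVecLin = ⊥ ∧ LinearMap.range C.mulVecLin = G.cycleSpace

/-- `n₋(A)`: the number of negative eigenvalues (with multiplicity) of a hermitian matrix. -/
noncomputable def negEig {𝕜 : Type*} [RCLike 𝕜] {m : Type*} [Fintype m] [DecidableEq m]
    (A : Matrix m m 𝕜) : ℕ :=
  if h : A.IsHermitian then Nat.card {i // h.eigenvalues i < 0} else 0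

/-- `n₊(A)`: the number of positive eigenvalues (with multiplicity) of a hermitian matrix. -/
noncomputable def posEig {𝕜 : Type*} [RCLike 𝕜] {m : Type*} [Fintype m] [DecidableEq m]
    (A : Matrix m m 𝕜) : ℕ :=
  if h : A.IsHermitian then Nat.card {i // 0 < h.eigenvalues i} else 0

/-- `n₀(A)`: the number of zero eigenvalues of a hermitian matrix, i.e. `dim ker A`. -/
noncomputable def zeroEig {𝕜 : Type*} [RCLike 𝕜] {m : Type*} [Fintype m] [DecidableEq m]
    (A : Matrix m m 𝕜) : ℕ :=
  Module.finrank 𝕜 (LinearMap.ker A.mulVecLin)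

/-- `n₋([A]_W)`: the Morse index (number of negative eigenvalues) of the compression of
a hermitian matrix `A` to the subspace `W`, i.e. the maximal dimension of a subspace of `W`
on which the hermitian form of `A` is negative definite. -/
noncomputable def negIndexOn {𝕜 : Type*} [RCLike 𝕜] {m : Type*} [Fintype m]
    (A : Matrix m m 𝕜) (W : Submodule 𝕜 (m → 𝕜)) : ℕ :=
  sSup {k : ℕ | ∃ U : Submodule 𝕜 (m → 𝕜), U ≤ W ∧ Module.finrank 𝕜 U = k ∧
    ∀ x ∈ U, x ≠ 0 → RCLike.re (star x ⬝ᵥ A.mulVec x) < 0}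

/-- `n₊([A]_W)`: the number of positive eigenvalues of the compression of a hermitian
matrix `A` to the subspace `W`. -/
noncomputable def posIndexOn {𝕜 : Type*} [RCLike 𝕜] {m : Type*} [Fintype m]
    (A : Matrix m m 𝕜) (W : Submodule 𝕜 (m → 𝕜)) : ℕ :=
  sSup {k : ℕ | ∃ U : Submodule 𝕜 (m → 𝕜), U ≤ W ∧ Module.finrank 𝕜 U = k ∧
    ∀ x ∈ U, x ≠ 0 → 0 < RCLike.re (star x ⬝ᵥ A.mulVec x)}

/-- The linear functional `x ↦ v ⬝ᵥ x`. -/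
noncomputable def dotLeft {𝕜 : Type*} [RCLike 𝕜] {m : Type*} [Fintype m] (v : m → 𝕜) :
    (m → 𝕜) →ₗ[𝕜] 𝕜 where
  toFun x := v ⬝ᵥ x
  map_add' x y := by simp [dotProduct_add]
  map_smul' c x := by simp [dotProduct_smul]

/-- `n₀([A]_W)`: the dimension of the kernel of the compression of `A` to `W`,
i.e. of `{x ∈ W : Ax ⊥ W}`. -/
noncomputable def zeroIndexOn {𝕜 : Type*} [RCLike 𝕜] {m : Type*} [Fintype m]
    (A : Matrix m m 𝕜) (W : Submodule 𝕜 (m → 𝕜)) : ℕ :=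
  Module.finrank 𝕜
    ↥(W ⊓ ⨅ y : W, LinearMap.ker ((dotLeft (star (y : m → 𝕜))).comp A.mulVecLin))

/-- Extension of `α ∈ ℝ^E` to an antisymmetric function on pairs of vertices:
`α_{rs} = α_e` if `e = (r→s) ∈ E`, `α_{rs} = -α_e` if `e = (s→r) ∈ E`, and `0` otherwise. -/
noncomputable def alphaExt {V E : Type*} [Fintype E] [DecidableEq V]
    (G : OrientedGraph V E) (α : E → ℝ) (r s : V) : ℝ :=
  ∑ e : E, ((if G.src e = r ∧ G.tgt e = s then α e else 0) -
            (if G.src e = s ∧ G.tgt e = r then α e else 0))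

/-- The phase-perturbed matrix `H_α` with `(H_α)_{rs} = e^{iα_{rs}} H_{rs}` for `r ≠ s`. -/
noncomputable def phaseMat {V E : Type*} [Fintype E] [DecidableEq V]
    (G : OrientedGraph V E) (H : Matrix V V ℝ) (α : E → ℝ) : Matrix V V ℂ :=
  Matrix.of fun r s =>
    if r = s then (H r r : ℂ)
    else Complex.exp (Complex.I * (alphaExt G α r s : ℂ)) * (H r s : ℂ)



namespace SylAux

variable {m : Type*} [Fintype m] [DecidableEq m]

/-- coordinate subspace of functions supported on `K` -/
noncomputable def coordSub (K : Set m) : Submodule ℂ (m → ℂ) where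
  carrier := {y | ∀ i, i ∉ K → y i = 0}
  add_mem' := fun ha hb i hi => by simp [ha i hi, hb i hi]
  zero_mem' := fun i _ => rfl
  smul_mem' := fun c a ha i hi => by simp [ha i hi]

lemma mem_coordSub {K : Set m} {y : m → ℂ} : y ∈ coordSub K ↔ ∀ i, i ∉ K → y i = 0 := Iff.rfl

lemma finrank_coordSub (K : Set m) : Module.finrank ℂ (coordSub K) = Nat.card K := by
  classical
  have : Fintype ↥K := Fintype.ofFinite _
  let e : coordSub K ≃ₗ[ℂ] (K → ℂ) :=
  { toFun := fun y i => y.1 i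
    map_add' := fun a b => rfl
    map_smul' := fun c a => rfl
    invFun := fun y => ⟨fun i => if h : i ∈ K then y ⟨i, h⟩ else 0, fun i hi => dif_neg hi⟩
    left_inv := fun a => by
      ext i
      by_cases h : i ∈ K
      · simp [h]
      · simp [h, (a.2 i h).symm]
    right_inv := fun y => by ext i; simp }
  rw [e.finrank_eq, Module.finrank_fintype_fun_eq_card, Nat.card_eq_fintype_card]

/-- the unitary change of coordinates attached to a Hermitian matrix -/
noncomputable def unitEquiv {A : Matrix m m ℂ} (hA : A.IsHermitian) : (m → ℂ) ≃ₗ[ℂ] (m → ℂ) :=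
  LinearEquiv.ofLinear (star (hA.eigenvectorUnitary : Matrix m m ℂ)).mulVecLin
    (hA.eigenvectorUnitary : Matrix m m ℂ).mulVecLin
    (by
      have h : star (hA.eigenvectorUnitary : Matrix m m ℂ) * (hA.eigenvectorUnitary : Matrix m m ℂ) = 1 :=
        Unitary.star_mul_self_of_mem hA.eigenvectorUnitary.2
      rw [← mulVecLin_mul, h, mulVecLin_one])
    (by
      have h : (hA.eigenvectorUnitary : Matrix m m ℂ) * star (hA.eigenvectorUnitary : Matrix m m ℂ) = 1 :=
        Unitary.mul_star_self_of_mem hA.eigenvectorUnitary.2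
      rw [← mulVecLin_mul, h, mulVecLin_one])

lemma unitEquiv_apply {A : Matrix m m ℂ} (hA : A.IsHermitian) (x : m → ℂ) :
    unitEquiv hA x = star (hA.eigenvectorUnitary : Matrix m m ℂ) *ᵥ x := rfl

lemma qf_eq_sum {A : Matrix m m ℂ} (hA : A.IsHermitian) (x : m → ℂ) :
    RCLike.re (star x ⬝ᵥ A.mulVec x)
      = ∑ i, hA.eigenvalues i * Complex.normSq (unitEquiv hA x i) := by
  set V := (hA.eigenvectorUnitary : Matrix m m ℂ) with hV
  set y := star V *ᵥ x with hy
  have h1 : star x ⬝ᵥ A.mulVec x = star y ⬝ᵥ (diagonal (RCLike.ofReal ∘ hA.eigenvalues) *ᵥ y) := by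
    conv_lhs => rw [hA.spectral_theorem, Unitary.conjStarAlgAut_apply]
    rw [← hV, ← mulVec_mulVec, ← mulVec_mulVec, dotProduct_mulVec]
    congr 1
    have := star_mulVec (M := star V) (v := x)
    rw [← hy] at this
    rw [this]
    rw [Matrix.star_eq_conjTranspose, conjTranspose_conjTranspose]
  rw [h1]
  have h2 : ∀ i, star y i * (diagonal (RCLike.ofReal ∘ hA.eigenvalues) *ᵥ y) i
      = ((hA.eigenvalues i : ℂ)) * ((Complex.normSq (y i) : ℂ)) := by
    intro i
    rw [mulVec_diagonal]
    simp only [Pi.star_apply, Function.comp_apply]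
    rw [← mul_assoc, mul_comm (star (y i)) _, mul_assoc]
    congr 1
    rw [Complex.star_def, mul_comm, Complex.mul_conj]
  rw [dotProduct]
  rw [map_sum]
  refine Finset.sum_congr rfl fun i _ => ?_
  rw [h2 i]
  rw [← Complex.ofReal_mul]
  simp [unitEquiv_apply, ← hy]
  exact Or.inl rfl


lemma isGreatest_neg (A : Matrix m m ℂ) (hA : A.IsHermitian) :
    IsGreatest {k : ℕ | ∃ U : Submodule ℂ (m → ℂ), Module.finrank ℂ U = k ∧
        ∀ x ∈ U, x ≠ 0 → RCLike.re (star x ⬝ᵥ A.mulVec x) < 0}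
      (Nat.card {i // hA.eigenvalues i < 0}) := by
  classical
  constructor
  · refine ⟨(coordSub {i | hA.eigenvalues i < 0}).comap
      (unitEquiv hA : (m → ℂ) →ₗ[ℂ] (m → ℂ)), ?_, ?_⟩
    · rw [Submodule.comap_equiv_eq_map_symm, LinearEquiv.finrank_map_eq, finrank_coordSub]
      rfl
    · intro x hx hx0
      have hx' : ∀ i, ¬ hA.eigenvalues i < 0 → unitEquiv hA x i = 0 :=
        fun i hi => (Submodule.mem_comap.1 hx) i hi
      rw [qf_eq_sum hA x]
      have hy0 : unitEquiv hA x ≠ 0 := fun h => hx0 (by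
        have := congrArg (unitEquiv hA).symm h
        simpa using this)
      obtain ⟨j, hj⟩ := Function.ne_iff.1 hy0
      have hjK : hA.eigenvalues j < 0 := by
        by_contra h
        exact hj (hx' j h)
      have hsum := Finset.sum_lt_sum (s := Finset.univ)
        (f := fun i => hA.eigenvalues i * Complex.normSq (unitEquiv hA x i))
        (g := fun _ => (0:ℝ))
        (fun i _ => by
          by_cases h : hA.eigenvalues i < 0
          · exact mul_nonpos_of_nonpos_of_nonneg h.le (Complex.normSq_nonneg _)
          · simp [hx' i h])
        ⟨j, Finset.mem_univ j,
          mul_neg_of_neg_of_pos hjK (Complex.normSq_pos.2 (by simpa using hj))⟩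
      simpa using hsum
  · rintro k ⟨U, hU, hneg⟩
    set P := (coordSub {i | ¬ hA.eigenvalues i < 0}).comap
      (unitEquiv hA : (m → ℂ) →ₗ[ℂ] (m → ℂ)) with hPdef
    have hdisj : U ⊓ P = ⊥ := by
      rw [Submodule.eq_bot_iff]
      rintro x ⟨hxU, hxP⟩
      by_contra hx0
      have h1 := hneg x hxU hx0
      have h2 : 0 ≤ RCLike.re (star x ⬝ᵥ A.mulVec x) := by
        rw [qf_eq_sum hA x]
        apply Finset.sum_nonneg
        intro i _
        by_cases h : hA.eigenvalues i < 0
        · have h0 : unitEquiv hA x i = 0 :=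
            (Submodule.mem_comap.1 hxP) i (fun hc => hc h)
          simp [h0]
        · push_neg at h
          exact mul_nonneg h (Complex.normSq_nonneg _)
      linarith
    have hle : Module.finrank ℂ U + Module.finrank ℂ P ≤ Fintype.card m := by
      have h3 := Submodule.finrank_sup_add_finrank_inf_eq U P
      rw [hdisj, finrank_bot, add_zero] at h3
      rw [← h3]
      have h4 := Submodule.finrank_le (R := ℂ) (M := m → ℂ) (U ⊔ P)
      simpa [Module.finrank_fintype_fun_eq_card] using h4
    have hP : Module.finrank ℂ P = Fintype.card {i // ¬ hA.eigenvalues i < 0} := by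
      rw [hPdef, Submodule.comap_equiv_eq_map_symm, LinearEquiv.finrank_map_eq,
        finrank_coordSub, Nat.card_eq_fintype_card]
      rfl
    have hcompl : Fintype.card {i // ¬ hA.eigenvalues i < 0}
        = Fintype.card m - Fintype.card {i // hA.eigenvalues i < 0} :=
      Fintype.card_subtype_compl _
    have hle2 : Fintype.card {i // hA.eigenvalues i < 0} ≤ Fintype.card m :=
      Fintype.card_subtype_le _
    rw [Nat.card_eq_fintype_card]
    omega

lemma isGreatest_pos (A : Matrix m m ℂ) (hA : A.IsHermitian) :
    IsGreatest {k : ℕ | ∃ U : Submodule ℂ (m → ℂ), Module.finrank ℂ U = k ∧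
        ∀ x ∈ U, x ≠ 0 → 0 < RCLike.re (star x ⬝ᵥ A.mulVec x)}
      (Nat.card {i // 0 < hA.eigenvalues i}) := by
  classical
  constructor
  · refine ⟨(coordSub {i | 0 < hA.eigenvalues i}).comap
      (unitEquiv hA : (m → ℂ) →ₗ[ℂ] (m → ℂ)), ?_, ?_⟩
    · rw [Submodule.comap_equiv_eq_map_symm, LinearEquiv.finrank_map_eq, finrank_coordSub]
      rfl
    · intro x hx hx0
      have hx' : ∀ i, ¬ 0 < hA.eigenvalues i → unitEquiv hA x i = 0 :=
        fun i hi => (Submodule.mem_comap.1 hx) i hi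
      rw [qf_eq_sum hA x]
      have hy0 : unitEquiv hA x ≠ 0 := fun h => hx0 (by
        have := congrArg (unitEquiv hA).symm h
        simpa using this)
      obtain ⟨j, hj⟩ := Function.ne_iff.1 hy0
      have hjK : 0 < hA.eigenvalues j := by
        by_contra h
        exact hj (hx' j h)
      have hsum := Finset.sum_lt_sum (s := Finset.univ)
        (f := fun _ => (0:ℝ))
        (g := fun i => hA.eigenvalues i * Complex.normSq (unitEquiv hA x i))
        (fun i _ => by
          by_cases h : 0 < hA.eigenvalues i
          · exact mul_nonneg h.le (Complex.normSq_nonneg _)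
          · simp [hx' i h])
        ⟨j, Finset.mem_univ j,
          mul_pos hjK (Complex.normSq_pos.2 (by simpa using hj))⟩
      simpa using hsum
  · rintro k ⟨U, hU, hpos⟩
    set P := (coordSub {i | ¬ 0 < hA.eigenvalues i}).comap
      (unitEquiv hA : (m → ℂ) →ₗ[ℂ] (m → ℂ)) with hPdef
    have hdisj : U ⊓ P = ⊥ := by
      rw [Submodule.eq_bot_iff]
      rintro x ⟨hxU, hxP⟩
      by_contra hx0
      have h1 := hpos x hxU hx0
      have h2 : RCLike.re (star x ⬝ᵥ A.mulVec x) ≤ 0 := by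
        rw [qf_eq_sum hA x]
        apply Finset.sum_nonpos
        intro i _
        by_cases h : 0 < hA.eigenvalues i
        · have h0 : unitEquiv hA x i = 0 :=
            (Submodule.mem_comap.1 hxP) i (fun hc => hc h)
          simp [h0]
        · push_neg at h
          exact mul_nonpos_of_nonpos_of_nonneg h (Complex.normSq_nonneg _)
      linarith
    have hle : Module.finrank ℂ U + Module.finrank ℂ P ≤ Fintype.card m := by
      have h3 := Submodule.finrank_sup_add_finrank_inf_eq U P
      rw [hdisj, finrank_bot, add_zero] at h3
      rw [← h3]
      have h4 := Submodule.finrank_le (R := ℂ) (M := m → ℂ) (U ⊔ P)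
      simpa [Module.finrank_fintype_fun_eq_card] using h4
    have hP : Module.finrank ℂ P = Fintype.card {i // ¬ 0 < hA.eigenvalues i} := by
      rw [hPdef, Submodule.comap_equiv_eq_map_symm, LinearEquiv.finrank_map_eq,
        finrank_coordSub, Nat.card_eq_fintype_card]
      rfl
    have hcompl : Fintype.card {i // ¬ 0 < hA.eigenvalues i}
        = Fintype.card m - Fintype.card {i // 0 < hA.eigenvalues i} :=
      Fintype.card_subtype_compl _
    have hle2 : Fintype.card {i // 0 < hA.eigenvalues i} ≤ Fintype.card m :=
      Fintype.card_subtype_le _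
    rw [Nat.card_eq_fintype_card]
    omega


section Transfer

variable {n : Type*} [Fintype n] [DecidableEq n]

lemma qf_transfer (H : Matrix n n ℂ) (S : Matrix n m ℂ) (x : m → ℂ) :
    star x ⬝ᵥ (Sᴴ * H * S).mulVec x = star (S.mulVec x) ⬝ᵥ H.mulVec (S.mulVec x) := by
  rw [← Matrix.mulVec_mulVec, ← Matrix.mulVec_mulVec, Matrix.dotProduct_mulVec,
    Matrix.star_mulVec]

lemma transfer_fwd (H : Matrix n n ℂ) (S : Matrix n m ℂ) (p : ℝ → Prop) (hp0 : ¬ p 0)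
    (U : Submodule ℂ (m → ℂ))
    (hU : ∀ x ∈ U, x ≠ 0 → p (RCLike.re (star x ⬝ᵥ (Sᴴ * H * S).mulVec x))) :
    ∃ U' : Submodule ℂ (n → ℂ), U' ≤ LinearMap.range S.mulVecLin ∧
      Module.finrank ℂ U' = Module.finrank ℂ U ∧
      ∀ y ∈ U', y ≠ 0 → p (RCLike.re (star y ⬝ᵥ H.mulVec y)) := by
  refine ⟨U.map S.mulVecLin, LinearMap.map_le_range, ?_, ?_⟩
  · have hinj : Function.Injective (S.mulVecLin.comp U.subtype) := by
      rw [← LinearMap.ker_eq_bot, Submodule.eq_bot_iff]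
      intro x hx
      have hx' : S.mulVec (x : m → ℂ) = 0 := hx
      by_contra hx0
      have hxne : (x : m → ℂ) ≠ 0 := fun h => hx0 (Subtype.ext h)
      have := hU x x.2 hxne
      rw [qf_transfer, hx'] at this
      simp only [star_zero, zero_dotProduct, map_zero] at this
      exact hp0 this
    have h1 := LinearMap.finrank_range_of_inj hinj
    rw [LinearMap.range_comp, Submodule.range_subtype] at h1
    rw [h1]
  · rintro y ⟨x, hx, rfl⟩ hy0
    have hxne : x ≠ 0 := by rintro rfl; exact hy0 (map_zero _)
    have := hU x hx hxne
    rwa [qf_transfer] at this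

set_option synthInstance.maxHeartbeats 1000000 in
set_option maxHeartbeats 1000000 in
lemma transfer_bwd (H : Matrix n n ℂ) (S : Matrix n m ℂ) (p : ℝ → Prop)
    (U' : Submodule ℂ (n → ℂ)) (hU'W : U' ≤ LinearMap.range S.mulVecLin)
    (hq : ∀ y ∈ U', y ≠ 0 → p (RCLike.re (star y ⬝ᵥ H.mulVec y))) :
    ∃ U : Submodule ℂ (m → ℂ), Module.finrank ℂ U = Module.finrank ℂ U' ∧
      ∀ x ∈ U, x ≠ 0 → p (RCLike.re (star x ⬝ᵥ (Sᴴ * H * S).mulVec x)) := by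
  set W := LinearMap.range S.mulVecLin with hW
  obtain ⟨g, hg⟩ := S.mulVecLin.rangeRestrict.exists_rightInverse_of_surjective
    (LinearMap.range_eq_top.2 (LinearMap.surjective_rangeRestrict _))
  have hfg : ∀ w : W, S.mulVecLin.rangeRestrict (g w) = w := fun w => DFunLike.congr_fun hg w
  have ginj : Function.Injective g := by
    intro a b hab
    have := congrArg S.mulVecLin.rangeRestrict hab
    rwa [hfg, hfg] at this
  set U'' := U'.comap W.subtype with hU''
  refine ⟨U''.map g, ?_, ?_⟩
  · have e1 : Module.finrank ℂ ↥U'' = Module.finrank ℂ ↥(U''.map g) :=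
      LinearEquiv.finrank_eq (Submodule.equivMapOfInjective g ginj U'')
    have e2 : Module.finrank ℂ ↥U'' = Module.finrank ℂ ↥U' :=
      LinearEquiv.finrank_eq (Submodule.comapSubtypeEquivOfLe hU'W)
    exact e1.symm.trans e2
  · rintro x ⟨w, hw, rfl⟩ hx0
    have hSx : S.mulVec (g w) = (w : n → ℂ) := by
      have := congrArg (Subtype.val) (hfg w)
      exact this
    have hwne : (w : n → ℂ) ≠ 0 := by
      intro h
      have : w = 0 := Subtype.ext h
      rw [this] at hx0
      exact hx0 (map_zero g)
    have hmem : (w : n → ℂ) ∈ U' := hw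
    have := hq _ hmem hwne
    rw [qf_transfer, hSx]
    exact this

end Transfer
end SylAux

/-- Sylvester's law of inertia with a general transformation:
`n₋(Sᴴ H S) = n₋([H]_{Ran S})` and `n₊(Sᴴ H S) = n₊([H]_{Ran S})`. -/
theorem sylvester_general_transformation
    {n m : Type*} [Fintype n] [Fintype m] [DecidableEq n] [DecidableEq m]
    (H : Matrix n n ℂ) (hH : H.IsHermitian) (S : Matrix n m ℂ) :
    negEig (Sᴴ * H * S) = negIndexOn H (LinearMap.range S.mulVecLin) ∧
    posEig (Sᴴ * H * S) = posIndexOn H (LinearMap.range S.mulVecLin) := by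
  classical
  have hA : (Sᴴ * H * S).IsHermitian := Matrix.isHermitian_conjTranspose_mul_mul S hH
  have main : ∀ (p : ℝ → Prop), ¬ p 0 → ∀ c : ℕ,
      IsGreatest {k : ℕ | ∃ U : Submodule ℂ (m → ℂ), Module.finrank ℂ U = k ∧
        ∀ x ∈ U, x ≠ 0 → p (RCLike.re (star x ⬝ᵥ (Sᴴ * H * S).mulVec x))} c →
      IsGreatest {k : ℕ | ∃ U : Submodule ℂ (n → ℂ), U ≤ LinearMap.range S.mulVecLin ∧
        Module.finrank ℂ U = k ∧ ∀ x ∈ U, x ≠ 0 →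
          p (RCLike.re (star x ⬝ᵥ H.mulVec x))} c := by
    intro p hp0 c hg
    constructor
    · obtain ⟨U, hU1, hU2⟩ := hg.1
      obtain ⟨U', h1, h2, h3⟩ := SylAux.transfer_fwd H S p hp0 U hU2
      exact ⟨U', h1, h2.trans hU1, h3⟩
    · rintro k ⟨U', h1, h2, h3⟩
      obtain ⟨U, hU1, hU2⟩ := SylAux.transfer_bwd H S p U' h1 h3
      exact hg.2 ⟨U, hU1.trans h2, hU2⟩
  constructor
  · have hg := main (fun t => t < 0) (lt_irrefl 0) _ (SylAux.isGreatest_neg _ hA)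
    unfold negEig negIndexOn
    rw [dif_pos hA]
    exact hg.csSup_eq.symm
  · have hg := main (fun t => 0 < t) (lt_irrefl 0) _ (SylAux.isGreatest_pos _ hA)
    unfold posEig posIndexOn
    rw [dif_pos hA]
    exact hg.csSup_eq.symm
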